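/- There exists a positive number s > 0 such that for every (x,y) in the region B̂ = {(x,y) : x ≥ k, y > v̂}, at least one of the following three conditions holds: y − ȳ ≥ s, or f(x,y) ∉ B̂, or ȳ − ȳ̄ ≥ s, where (x̄, ȳ) := f(x,y) and (x̄̄, ȳ̄) := f(x̄, ȳ). -/
import Mathlib


/-- Moving downward in region `B̂`: there is a uniform positive speed `s` such that
for every point of `B̂`, either `y - ȳ ≥ s`, or the image leaves `B̂`,
or `ȳ - ȳ̄ ≥ s`. -/
theorem chialvo_regionB_speed
    (a b c k : ℝ)
    (ha : a ∈ Set.Ioo (0:ℝ) 1) (hb : b ∈ Set.Ioo (0:ℝ) 1)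
    (hc : c ∈ Set.Ioo (0:ℝ) 1) (hk : 0 < k)
    (f : ℝ × ℝ → ℝ × ℝ)
    (hf : ∀ p : ℝ × ℝ,
      f p = (p.1 ^ 2 * Real.exp (p.2 - p.1) + k, a * p.2 - b * p.1 + c))
    (v : ℝ) (hv : v = (c - b * k) / (1 - a))
    (B : Set (ℝ × ℝ)) (hB : B = {p : ℝ × ℝ | p.1 ≥ k ∧ p.2 > v}) :
    ∃ s : ℝ, s > 0 ∧ ∀ p ∈ B,
      p.2 - (f p).2 ≥ s ∨ f p ∉ B ∨ (f p).2 - (f (f p)).2 ≥ s := by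
  obtain ⟨ha0, ha1⟩ := ha
  obtain ⟨hb0, hb1⟩ := hb
  have ha' : (0:ℝ) < 1 - a := by linarith
  have hvid : (1 - a) * v = c - b * k := by
    rw [hv]; field_simp
  refine ⟨min b (b * k ^ 2 * Real.exp (v - k - 1)), lt_min hb0 (by positivity), ?_⟩
  intro p hp
  rw [hB] at hp
  obtain ⟨hx, hy⟩ := hp
  by_cases hcase : p.1 ≥ k + 1
  · left
    have h1 : (f p).2 = a * p.2 - b * p.1 + c := by rw [hf p]
    have h2 : 0 < (1 - a) * (p.2 - v) := mul_pos ha' (by linarith)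
    have h3 : b * 1 ≤ b * (p.1 - k) :=
      mul_le_mul_of_nonneg_left (by linarith) hb0.le
    have key : p.2 - (f p).2 ≥ b := by
      rw [h1]; nlinarith [h2, h3]
    exact le_trans (min_le_left _ _) key
  · by_cases hfp : f p ∈ B
    · right; right
      have hfpB := hfp
      rw [hB] at hfpB
      obtain ⟨hx1, hy1⟩ := hfpB
      have h1 : (f p).1 = p.1 ^ 2 * Real.exp (p.2 - p.1) + k := by rw [hf p]
      have h2 : (f (f p)).2 = a * (f p).2 - b * (f p).1 + c := by rw [hf (f p)]
      have hpos : 0 < (1 - a) * ((f p).2 - v) := mul_pos ha' (by linarith)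
      have hexp : Real.exp (v - k - 1) ≤ Real.exp (p.2 - p.1) := by
        apply Real.exp_le_exp.mpr; push_neg at hcase; linarith
      have hsq : k ^ 2 ≤ p.1 ^ 2 := by nlinarith
      have hx2 : b * (k ^ 2 * Real.exp (v - k - 1)) ≤
          b * (p.1 ^ 2 * Real.exp (p.2 - p.1)) := by
        apply mul_le_mul_of_nonneg_left _ hb0.le
        apply mul_le_mul hsq hexp (Real.exp_pos _).le (by positivity)
      have key : (f p).2 - (f (f p)).2 ≥ b * k ^ 2 * Real.exp (v - k - 1) := by
        rw [h2]
        nlinarith [hpos, hx2, h1]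
      exact le_trans (min_le_right _ _) key
    · right; left; exact hfp
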